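/- arXiv:2003.13613 — 4 statements merged into one kernel-verified Lean document; each statement's English description precedes it below -/
import Mathlib

section
/- Let n ≥ 2 be an integer, b > 0, and let ρ : [0,b] → ℝ be a C² function with ρ(0) = ρ(b) = 0, ρ'(0) = 1, ρ'(b) = -1, and ρ > 0 on (0,b). Suppose that the scalar curvature expression Scal(t) = -2(n-1)·ρ''(t)/ρ(t) + (n-1)(n-2)·(1 - ρ'(t)²)/ρ(t)² is non-negative for all t ∈ (0,b). Then |ρ'(t)| ≤ 1 for all t ∈ [0,b]. -/
open Set

/-- If a C² profile `ρ : [0,b] → ℝ` satisfies the boundary conditions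
`ρ(0) = ρ(b) = 0`, `ρ'(0) = 1`, `ρ'(b) = -1`, is positive on `(0,b)`, and the scalar
curvature expression `-2(n-1)ρ''/ρ + (n-1)(n-2)(1-ρ'²)/ρ²` is non-negative on `(0,b)`,
then `|ρ'| ≤ 1` on `[0,b]`. -/
theorem invariant_spectrum_rho_deriv_bound
    (n : ℕ) (hn : 2 ≤ n) (b : ℝ) (hb : 0 < b)
    (ρ ρ' ρ'' : ℝ → ℝ)
    (hρ1 : ∀ t ∈ Icc (0:ℝ) b, HasDerivWithinAt ρ (ρ' t) (Icc 0 b) t)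
    (hρ2 : ∀ t ∈ Icc (0:ℝ) b, HasDerivWithinAt ρ' (ρ'' t) (Icc 0 b) t)
    (hρ2c : ContinuousOn ρ'' (Icc 0 b))
    (h00 : ρ 0 = 0) (hbb : ρ b = 0) (h0' : ρ' 0 = 1) (hb' : ρ' b = -1)
    (hpos : ∀ t ∈ Ioo (0:ℝ) b, 0 < ρ t)
    (hscal : ∀ t ∈ Ioo (0:ℝ) b,
      0 ≤ -2 * ((n:ℝ) - 1) * ρ'' t / ρ t
          + ((n:ℝ) - 1) * ((n:ℝ) - 2) * (1 - (ρ' t) ^ 2) / (ρ t) ^ 2) :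
    ∀ t ∈ Icc (0:ℝ) b, |ρ' t| ≤ 1 := by
  have hn1 : (0:ℝ) < (n:ℝ) - 1 := by
    have : (2:ℝ) ≤ (n:ℝ) := by exact_mod_cast hn
    linarith
  -- Key pointwise inequality: 2 ρ'' ρ ≤ (n-2)(1 - ρ'²)
  have key : ∀ t ∈ Ioo (0:ℝ) b,
      2 * ρ'' t * ρ t ≤ ((n:ℝ) - 2) * (1 - (ρ' t) ^ 2) := by
    intro t ht
    have hs := hscal t ht
    have hρt := hpos t ht
    have h1 : -2 * ((n:ℝ) - 1) * ρ'' t / ρ t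
        + ((n:ℝ) - 1) * ((n:ℝ) - 2) * (1 - (ρ' t) ^ 2) / (ρ t) ^ 2
        = (-2 * ((n:ℝ) - 1) * ρ'' t * ρ t
            + ((n:ℝ) - 1) * ((n:ℝ) - 2) * (1 - (ρ' t) ^ 2)) / (ρ t) ^ 2 := by
      field_simp
    rw [h1] at hs
    have hX : 0 ≤ -2 * ((n:ℝ) - 1) * ρ'' t * ρ t
        + ((n:ℝ) - 1) * ((n:ℝ) - 2) * (1 - (ρ' t) ^ 2) := by
      have h2 := (le_div_iff₀ (by positivity : (0:ℝ) < (ρ t)^2)).mp hs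
      linarith
    nlinarith [hX, hn1]
  have hcont' : ContinuousOn ρ' (Icc 0 b) :=
    fun t ht => (hρ2 t ht).continuousWithinAt
  rcases eq_or_lt_of_le hn with h2 | h3
  · -- case n = 2 : ρ'' ≤ 0 on (0,b), so ρ' is antitone
    have hcast : ((n:ℝ) - 2) = 0 := by
      rw [← h2]; norm_num
    have hρ''le : ∀ t ∈ interior (Icc (0:ℝ) b), deriv ρ' t ≤ 0 := by
      intro t ht
      rw [interior_Icc] at ht
      have hd : HasDerivAt ρ' (ρ'' t) t :=
        (hρ2 t (Ioo_subset_Icc_self ht)).hasDerivAt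
          (Icc_mem_nhds ht.1 ht.2)
      rw [hd.deriv]
      have hk := key t ht
      rw [hcast, zero_mul] at hk
      nlinarith [hpos t ht]
    have hanti : AntitoneOn ρ' (Icc 0 b) :=
      antitoneOn_of_deriv_nonpos (convex_Icc 0 b) hcont'
        (fun t ht => by
          rw [interior_Icc] at ht
          exact ((hρ2 t (Ioo_subset_Icc_self ht)).hasDerivAt
            (Icc_mem_nhds ht.1 ht.2)).differentiableAt.differentiableWithinAt)
        hρ''le
    intro t ht
    rw [abs_le]
    constructor
    · have := hanti ht (right_mem_Icc.mpr hb.le) ht.2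
      rw [hb'] at this; linarith
    · have := hanti (left_mem_Icc.mpr hb.le) ht ht.1
      rw [h0'] at this; linarith
  · -- case n ≥ 3 : maximum principle for ρ'²
    have hn2 : (0:ℝ) < (n:ℝ) - 2 := by
      have : (3:ℝ) ≤ (n:ℝ) := by exact_mod_cast h3
      linarith
    by_contra hcon
    push_neg at hcon
    obtain ⟨s, hs, hs1⟩ := hcon
    have hfc : ContinuousOn (fun t => (ρ' t) ^ 2) (Icc 0 b) := hcont'.pow 2
    obtain ⟨t₀, ht₀, hmax⟩ :=
      (isCompact_Icc).exists_isMaxOn (nonempty_Icc.mpr hb.le) hfc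
    have hgt : 1 < (ρ' t₀) ^ 2 := by
      have h1 : (ρ' s) ^ 2 ≤ (ρ' t₀) ^ 2 := hmax hs
      have : 1 < (ρ' s) ^ 2 := by
        have := sq_abs (ρ' s)
        nlinarith
      linarith
    have ht₀i : t₀ ∈ Ioo (0:ℝ) b := by
      rcases ht₀.1.lt_or_eq with h | h
      · rcases ht₀.2.lt_or_eq with h' | h'
        · exact ⟨h, h'⟩
        · exfalso; rw [h', hb'] at hgt; norm_num at hgt
      · exfalso; rw [← h, h0'] at hgt; norm_num at hgt
    have hd : HasDerivAt (fun t => (ρ' t) ^ 2)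
        (2 * ρ' t₀ * ρ'' t₀) t₀ := by
      have h := ((hρ2 t₀ ht₀).hasDerivAt (Icc_mem_nhds ht₀i.1 ht₀i.2)).pow 2
      simpa [mul_comm, mul_assoc, mul_left_comm, Pi.pow_def] using h
    have hzero : 2 * ρ' t₀ * ρ'' t₀ = 0 :=
      (hmax.isLocalMax (Icc_mem_nhds ht₀i.1 ht₀i.2)).hasDerivAt_eq_zero hd
    have hρ'ne : ρ' t₀ ≠ 0 := by
      intro h; rw [h] at hgt; norm_num at hgt
    have hρ''0 : ρ'' t₀ = 0 := by
      rcases mul_eq_zero.mp hzero with h | h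
      · rcases mul_eq_zero.mp h with h' | h'
        · norm_num at h'
        · exact absurd h' hρ'ne
      · exact h
    have hk := key t₀ ht₀i
    rw [hρ''0] at hk
    nlinarith [hpos t₀ ht₀i]
end

section
/- Let n ≥ 2 be an integer, b > 0, and let ρ : [0,b] → ℝ be C¹ with ρ(0) = ρ(b) = 0, ρ'(0) = 1, ρ'(b) = -1, ρ > 0 on (0,b), and ∫₀ᵇ ρ^{n-1} = 1. Let s(t) = ∫₀ᵗ ρ(τ)^{n-1} dτ with inverse t(s), and let Φ(s) = ρ(t(s)). Then Φ(0)ⁿ = Φ(1)ⁿ = 0, the one-sided derivative of Φⁿ at 0 (i.e. the limit as s → 0⁺ of Φ(s)ⁿ/s) equals n, and the one-sided derivative of Φⁿ at 1 (i.e. the limit as s → 1⁻ of Φ(s)ⁿ/(s-1)) equals -n. -/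
open Set MeasureTheory Filter

/-- With `Φ(s) = ρ(t(s))` as above and boundary conditions
`ρ(0) = ρ(b) = 0`, `ρ'(0) = 1`, `ρ'(b) = -1`, one has `Φ(0)ⁿ = Φ(1)ⁿ = 0`, the
one-sided derivative of `Φⁿ` at `0` equals `n`, and the one-sided derivative of
`Φⁿ` at `1` equals `-n`. -/
theorem Phi_pow_n_boundary
    (n : ℕ) (hn : 2 ≤ n) (b : ℝ) (hb : 0 < b) (ρ ρ' : ℝ → ℝ)
    (hρ1 : ∀ t ∈ Icc (0:ℝ) b, HasDerivWithinAt ρ (ρ' t) (Icc 0 b) t)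
    (hρ'c : ContinuousOn ρ' (Icc 0 b))
    (h00 : ρ 0 = 0) (hbb : ρ b = 0) (h0' : ρ' 0 = 1) (hb' : ρ' b = -1)
    (hpos : ∀ t ∈ Ioo (0:ℝ) b, 0 < ρ t)
    (hvol : ∫ τ in (0:ℝ)..b, ρ τ ^ (n - 1) = 1)
    (S T : ℝ → ℝ)
    (hS : ∀ t, S t = ∫ τ in (0:ℝ)..t, ρ τ ^ (n - 1))
    (hTmem : ∀ s ∈ Icc (0:ℝ) 1, T s ∈ Icc 0 b)
    (hTS : ∀ t ∈ Icc (0:ℝ) b, T (S t) = t)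
    (hST : ∀ s ∈ Icc (0:ℝ) 1, S (T s) = s) :
    (ρ (T 0)) ^ n = 0 ∧ (ρ (T 1)) ^ n = 0 ∧
    Tendsto (fun s => (ρ (T s)) ^ n / s) (nhdsWithin 0 (Ioi 0)) (nhds (n:ℝ)) ∧
    Tendsto (fun s => (ρ (T s)) ^ n / (s - 1)) (nhdsWithin 1 (Iio 1)) (nhds (-(n:ℝ))) := by
  have hρc : ContinuousOn ρ (Icc 0 b) := fun t ht => (hρ1 t ht).continuousWithinAt
  set f : ℝ → ℝ := fun τ => ρ τ ^ (n - 1) with hf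
  have hfc : ContinuousOn f (Icc 0 b) := hρc.pow _
  have hfint : ∀ t₁ ∈ Icc (0:ℝ) b, ∀ t₂ ∈ Icc (0:ℝ) b,
      IntervalIntegrable f volume t₁ t₂ := by
    intro t₁ h₁ t₂ h₂
    refine (hfc.mono ?_).intervalIntegrable
    exact uIcc_subset_Icc h₁ h₂
  have hS0 : S 0 = 0 := by rw [hS]; simp
  have hSb : S b = 1 := by rw [hS]; exact hvol
  have hT0 : T 0 = 0 := by
    have := hTS 0 ⟨le_rfl, hb.le⟩; rwa [hS0] at this
  have hT1 : T 1 = b := by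
    have := hTS b ⟨hb.le, le_rfl⟩; rwa [hSb] at this
  have hρnn : ∀ t ∈ Icc (0:ℝ) b, 0 ≤ ρ t := by
    intro t ht
    rcases ht.1.eq_or_lt with h | h
    · rw [← h, h00]
    rcases ht.2.eq_or_lt with h' | h'
    · rw [h', hbb]
    · exact (hpos t ⟨h, h'⟩).le
  have hfpos : ∀ t ∈ Ioo (0:ℝ) b, 0 < f t := fun t ht =>
    pow_pos (hpos t ht) _
  -- monotonicity of S on [0, b]
  have hadd : ∀ t₁ ∈ Icc (0:ℝ) b, ∀ t₂ ∈ Icc (0:ℝ) b,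
      S t₁ + ∫ τ in t₁..t₂, f τ = S t₂ := by
    intro t₁ h₁ t₂ h₂
    rw [hS, hS]
    exact intervalIntegral.integral_add_adjacent_intervals
      (hfint 0 (left_mem_Icc.2 hb.le) t₁ h₁) (hfint t₁ h₁ t₂ h₂)
  have hSmono : ∀ t₁ ∈ Icc (0:ℝ) b, ∀ t₂ ∈ Icc (0:ℝ) b, t₁ ≤ t₂ → S t₁ ≤ S t₂ := by
    intro t₁ h₁ t₂ h₂ h12
    have h := hadd t₁ h₁ t₂ h₂
    have hnn : 0 ≤ ∫ τ in t₁..t₂, f τ :=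
      intervalIntegral.integral_nonneg h12 (fun u hu =>
        pow_nonneg (hρnn u ⟨h₁.1.trans hu.1, hu.2.trans h₂.2⟩) _)
    linarith
  have hSpos : ∀ t ∈ Ioo (0:ℝ) b, 0 < S t := by
    intro t ht
    rw [hS]
    exact intervalIntegral.intervalIntegral_pos_of_pos_on
      (hfint 0 (left_mem_Icc.2 hb.le) t ⟨ht.1.le, ht.2.le⟩)
      (fun x hx => hfpos x ⟨hx.1, hx.2.trans ht.2⟩) ht.1
  have hSlt : ∀ t ∈ Ioo (0:ℝ) b, S t < 1 := by
    intro t ht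
    have h := hadd t ⟨ht.1.le, ht.2.le⟩ b (right_mem_Icc.2 hb.le)
    have hpos' : 0 < ∫ τ in t..b, f τ :=
      intervalIntegral.intervalIntegral_pos_of_pos_on
        (hfint t ⟨ht.1.le, ht.2.le⟩ b (right_mem_Icc.2 hb.le))
        (fun x hx => hfpos x ⟨ht.1.trans hx.1, hx.2⟩) ht.2
    rw [hSb] at h
    linarith
  have hSnn : ∀ t ∈ Icc (0:ℝ) b, 0 ≤ S t := by
    intro t ht
    have := hSmono 0 (left_mem_Icc.2 hb.le) t ht ht.1
    rwa [hS0] at this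
  -- derivatives on the interior
  have hρd : ∀ t ∈ Ioo (0:ℝ) b, HasDerivAt ρ (ρ' t) t := by
    intro t ht
    exact (hρ1 t ⟨ht.1.le, ht.2.le⟩).hasDerivAt (Icc_mem_nhds ht.1 ht.2)
  have hFd : ∀ t ∈ Ioo (0:ℝ) b,
      HasDerivAt (fun u => ρ u ^ n) ((n : ℝ) * ρ t ^ (n - 1) * ρ' t) t := by
    intro t ht
    exact (hρd t ht).pow n
  have hSfun : S = fun t => ∫ τ in (0:ℝ)..t, f τ := funext hS
  have hSd : ∀ t ∈ Ioo (0:ℝ) b, HasDerivAt S (f t) t := by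
    intro t ht
    rw [hSfun]
    refine intervalIntegral.integral_hasDerivAt_right
      (hfint 0 (left_mem_Icc.2 hb.le) t ⟨ht.1.le, ht.2.le⟩)
      ⟨Icc 0 b, Icc_mem_nhds ht.1 ht.2, hfc.aestronglyMeasurable measurableSet_Icc⟩
      (hfc.continuousAt (Icc_mem_nhds ht.1 ht.2))
  have hScont : ContinuousOn S (Icc 0 b) := by
    rw [hSfun]
    have := intervalIntegral.continuousOn_primitive_interval
      (μ := volume) (f := f) (a := 0) (b := b)
      ((hfc.mono (by rw [uIcc_of_le hb.le])).integrableOn_compact (isCompact_uIcc))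
    rwa [uIcc_of_le hb.le] at this
  have hfne : ∀ t ∈ Ioo (0:ℝ) b, f t ≠ 0 := fun t ht => (hfpos t ht).ne'
  -- the divergence-quotient limits
  have hIoo0 : Ioo (0:ℝ) b ∈ nhdsWithin (0:ℝ) (Ioi 0) := by
    rw [← nhdsWithin_Ioo_eq_nhdsGT hb]
    exact self_mem_nhdsWithin
  have hIoob : Ioo (0:ℝ) b ∈ nhdsWithin b (Iio b) := by
    rw [← nhdsWithin_Ioo_eq_nhdsLT hb]
    exact self_mem_nhdsWithin
  have hdiv0 : Tendsto (fun t => ((n : ℝ) * ρ t ^ (n - 1) * ρ' t) / f t)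
      (nhdsWithin 0 (Ioi 0)) (nhds (n : ℝ)) := by
    have hρ't : Tendsto ρ' (nhdsWithin 0 (Ioi 0)) (nhds 1) := by
      rw [← h0', ← nhdsWithin_Ioo_eq_nhdsGT hb]
      exact ((hρ'c 0 (left_mem_Icc.2 hb.le)).mono Ioo_subset_Icc_self).tendsto
    have : Tendsto (fun t => (n : ℝ) * ρ' t) (nhdsWithin 0 (Ioi 0)) (nhds ((n : ℝ) * 1)) :=
      tendsto_const_nhds.mul hρ't
    rw [mul_one] at this
    refine this.congr' ?_
    filter_upwards [hIoo0] with t ht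
    have h := hfne t ht
    field_simp [hf]
    ring
  have hdivb : Tendsto (fun t => ((n : ℝ) * ρ t ^ (n - 1) * ρ' t) / f t)
      (nhdsWithin b (Iio b)) (nhds (-(n : ℝ))) := by
    have hρ't : Tendsto ρ' (nhdsWithin b (Iio b)) (nhds (-1)) := by
      rw [← hb', ← nhdsWithin_Ioo_eq_nhdsLT hb]
      exact ((hρ'c b (right_mem_Icc.2 hb.le)).mono Ioo_subset_Icc_self).tendsto
    have : Tendsto (fun t => (n : ℝ) * ρ' t) (nhdsWithin b (Iio b)) (nhds ((n : ℝ) * (-1))) :=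
      tendsto_const_nhds.mul hρ't
    rw [mul_neg_one] at this
    refine this.congr' ?_
    filter_upwards [hIoob] with t ht
    have h := hfne t ht
    field_simp [hf]
    ring
  -- L'Hôpital at the two endpoints
  have hL0 : Tendsto (fun t => ρ t ^ n / S t) (nhdsWithin 0 (Ioi 0)) (nhds (n : ℝ)) := by
    refine HasDerivAt.lhopital_zero_right_on_Ico hb hFd hSd
      ((hρc.mono Ico_subset_Icc_self).pow n) (hScont.mono Ico_subset_Icc_self)
      hfne ?_ hS0 hdiv0
    rw [h00]; exact zero_pow (by omega)
  have hLb : Tendsto (fun t => ρ t ^ n / (S t - 1)) (nhdsWithin b (Iio b)) (nhds (-(n : ℝ))) := by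
    have hSd' : ∀ t ∈ Ioo (0:ℝ) b, HasDerivAt (fun u => S u - 1) (f t) t :=
      fun t ht => (hSd t ht).sub_const 1
    refine HasDerivAt.lhopital_zero_left_on_Ioc hb hFd hSd'
      ((hρc.mono Ioc_subset_Icc_self).pow n)
      ((hScont.mono Ioc_subset_Icc_self).sub continuousOn_const)
      hfne ?_ (by rw [hSb]; ring) hdivb
    rw [hbb]; exact zero_pow (by omega)
  -- behaviour of T near the endpoints
  have hTne0 : ∀ s ∈ Ioo (0:ℝ) 1, 0 < T s := by
    intro s hs
    have hmem : s ∈ Icc (0:ℝ) 1 := ⟨hs.1.le, hs.2.le⟩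
    rcases (hTmem s hmem).1.eq_or_lt with h | h
    · exfalso
      have := hST s hmem
      rw [← h, hS0] at this
      exact hs.1.ne this
    · exact h
  have hTneb : ∀ s ∈ Ioo (0:ℝ) 1, T s < b := by
    intro s hs
    have hmem : s ∈ Icc (0:ℝ) 1 := ⟨hs.1.le, hs.2.le⟩
    rcases (hTmem s hmem).2.eq_or_lt with h | h
    · exfalso
      have := hST s hmem
      rw [h, hSb] at this
      exact hs.2.ne' this
    · exact h
  have hIoo01 : Ioo (0:ℝ) 1 ∈ nhdsWithin (0:ℝ) (Ioi 0) := by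
    rw [← nhdsWithin_Ioo_eq_nhdsGT one_pos]
    exact self_mem_nhdsWithin
  have hIoo01' : Ioo (0:ℝ) 1 ∈ nhdsWithin (1:ℝ) (Iio 1) := by
    rw [← nhdsWithin_Ioo_eq_nhdsLT one_pos]
    exact self_mem_nhdsWithin
  have hT0' : Tendsto T (nhdsWithin 0 (Ioi 0)) (nhdsWithin 0 (Ioi 0)) := by
    rw [tendsto_nhdsWithin_iff]
    constructor
    · rw [Metric.tendsto_nhdsWithin_nhds]
      intro ε hε
      set c : ℝ := min ε b with hc
      have hc0 : 0 < c := lt_min hε hb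
      have hc2 : c / 2 ∈ Ioo (0:ℝ) b := ⟨by linarith, by
        have : c ≤ b := min_le_right _ _
        linarith⟩
      refine ⟨S (c / 2), hSpos _ hc2, fun x hx hdx => ?_⟩
      have hx0 : 0 < x := hx
      rw [Real.dist_eq, sub_zero, abs_of_pos hx0] at hdx
      have hδ1 : S (c / 2) ≤ 1 := by
        rw [← hSb]
        exact hSmono _ ⟨hc2.1.le, hc2.2.le⟩ b (right_mem_Icc.2 hb.le) hc2.2.le
      have hxmem : x ∈ Icc (0:ℝ) 1 := ⟨hx0.le, by linarith⟩
      have hTx : T x < c / 2 := by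
        by_contra hcon
        push_neg at hcon
        have := hSmono _ ⟨hc2.1.le, hc2.2.le⟩ _ (hTmem x hxmem) hcon
        rw [hST x hxmem] at this
        linarith
      rw [Real.dist_eq, sub_zero, abs_of_nonneg (hTmem x hxmem).1]
      have : c ≤ ε := min_le_left _ _
      linarith
    · filter_upwards [hIoo01] with s hs using hTne0 s hs
  have hTb' : Tendsto T (nhdsWithin 1 (Iio 1)) (nhdsWithin b (Iio b)) := by
    rw [tendsto_nhdsWithin_iff]
    constructor
    · rw [Metric.tendsto_nhdsWithin_nhds]
      intro ε hε
      set c : ℝ := min ε b with hc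
      have hc0 : 0 < c := lt_min hε hb
      have hcb : c ≤ b := min_le_right _ _
      have hc2 : b - c / 2 ∈ Ioo (0:ℝ) b := ⟨by linarith, by linarith⟩
      refine ⟨1 - S (b - c / 2), by linarith [hSlt _ hc2], fun x hx hdx => ?_⟩
      have hx1 : x < 1 := hx
      rw [Real.dist_eq, abs_of_neg (by linarith : x - 1 < 0)] at hdx
      have hge : S (b - c / 2) < x := by linarith
      have hxmem : x ∈ Icc (0:ℝ) 1 := ⟨(hSnn _ ⟨hc2.1.le, hc2.2.le⟩).trans hge.le, hx1.le⟩
      have hTx : b - c / 2 < T x := by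
        by_contra hcon
        push_neg at hcon
        have := hSmono _ (hTmem x hxmem) _ ⟨hc2.1.le, hc2.2.le⟩ hcon
        rw [hST x hxmem] at this
        linarith
      rw [Real.dist_eq, abs_of_nonpos (by linarith [(hTmem x hxmem).2] : T x - b ≤ 0)]
      have : c ≤ ε := min_le_left _ _
      linarith [(hTmem x hxmem).2]
    · filter_upwards [hIoo01'] with s hs using hTneb s hs
  -- compose
  refine ⟨by rw [hT0, h00]; exact zero_pow (by omega),
          by rw [hT1, hbb]; exact zero_pow (by omega), ?_, ?_⟩
  · have := hL0.comp hT0'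
    refine this.congr' ?_
    filter_upwards [hIoo01] with s hs
    simp only [Function.comp]
    rw [hST s ⟨hs.1.le, hs.2.le⟩]
  · have := hLb.comp hTb'
    refine this.congr' ?_
    filter_upwards [hIoo01'] with s hs
    simp only [Function.comp]
    rw [hST s ⟨hs.1.le, hs.2.le⟩]
end

section
/- Let n ≥ 2 be an integer, b > 0, and let ρ : [0,b] → ℝ be a C² function with ρ(0) = ρ(b) = 0, ρ'(0) = 1, ρ'(b) = -1, ρ > 0 on (0,b), ∫₀ᵇ ρ^{n-1} = 1, and suppose the scalar curvature expression -2(n-1)·ρ''(t)/ρ(t) + (n-1)(n-2)·(1 - ρ'(t)²)/ρ(t)² is non-negative on (0,b). Define s(t) = ∫₀ᵗ ρ(τ)^{n-1} dτ, let t(s) be its inverse, and set Φ(s) = ρ(t(s)). Then Φ(s) ≤ Φ_max(s) for all s ∈ [0,1], where Φ_max(s) = (n·s)^{1/n} if 0 ≤ s ≤ 1/2 and Φ_max(s) = (n·(1-s))^{1/n} if 1/2 ≤ s ≤ 1. -/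
open Set MeasureTheory

/-- For a C² profile `ρ` of a unit-volume rotationally symmetric metric
on the n-sphere with non-negative scalar curvature, the profile `Φ(s) = ρ(t(s))` in the
coordinate `s(t) = ∫₀ᵗ ρ^{n-1}` satisfies `Φ(s) ≤ Φ_max(s)` on `[0,1]`, where
`Φ_max(s) = (ns)^{1/n}` for `s ≤ 1/2` and `Φ_max(s) = (n(1-s))^{1/n}` for `s ≥ 1/2`. -/
theorem Phi_le_Phimax_of_nonneg_scal
    (n : ℕ) (hn : 2 ≤ n) (b : ℝ) (hb : 0 < b) (ρ ρ' ρ'' : ℝ → ℝ)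
    (hρ1 : ∀ t ∈ Icc (0:ℝ) b, HasDerivWithinAt ρ (ρ' t) (Icc 0 b) t)
    (hρ2 : ∀ t ∈ Icc (0:ℝ) b, HasDerivWithinAt ρ' (ρ'' t) (Icc 0 b) t)
    (hρ2c : ContinuousOn ρ'' (Icc 0 b))
    (h00 : ρ 0 = 0) (hbb : ρ b = 0) (h0' : ρ' 0 = 1) (hb' : ρ' b = -1)
    (hpos : ∀ t ∈ Ioo (0:ℝ) b, 0 < ρ t)
    (hvol : ∫ τ in (0:ℝ)..b, ρ τ ^ (n - 1) = 1)
    (hscal : ∀ t ∈ Ioo (0:ℝ) b,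
      0 ≤ -2 * ((n:ℝ) - 1) * ρ'' t / ρ t
          + ((n:ℝ) - 1) * ((n:ℝ) - 2) * (1 - (ρ' t) ^ 2) / (ρ t) ^ 2)
    (S T : ℝ → ℝ)
    (hS : ∀ t, S t = ∫ τ in (0:ℝ)..t, ρ τ ^ (n - 1))
    (hTmem : ∀ s ∈ Icc (0:ℝ) 1, T s ∈ Icc 0 b)
    (hTS : ∀ t ∈ Icc (0:ℝ) b, T (S t) = t)
    (hST : ∀ s ∈ Icc (0:ℝ) 1, S (T s) = s) :
    ∀ s ∈ Icc (0:ℝ) 1,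
      ρ (T s) ≤ if s ≤ 1/2 then ((n:ℝ) * s) ^ ((1:ℝ)/n)
                else ((n:ℝ) * (1 - s)) ^ ((1:ℝ)/n) := by
  have hn' : (2:ℝ) ≤ (n:ℝ) := by exact_mod_cast hn
  have hnpos : (0:ℝ) < n := by linarith
  have hn0 : n ≠ 0 := by omega
  -- continuity of ρ and ρ' on [0,b]
  have hρc : ContinuousOn ρ (Icc 0 b) := fun t ht => (hρ1 t ht).continuousWithinAt
  have hρ'c : ContinuousOn ρ' (Icc 0 b) := fun t ht => (hρ2 t ht).continuousWithinAt
  -- nonnegativity of ρ on [0,b]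
  have hρnn : ∀ t ∈ Icc (0:ℝ) b, 0 ≤ ρ t := by
    intro t ht
    rcases eq_or_lt_of_le ht.1 with h0 | h0
    · simp [← h0, h00]
    rcases eq_or_lt_of_le ht.2 with h1 | h1
    · simp [h1, hbb]
    exact (hpos t ⟨h0, h1⟩).le
  -- ρ'' ≤ 0 wherever (ρ')² ≥ 1 on (0,b)
  have hsecond : ∀ t ∈ Ioo (0:ℝ) b, 1 ≤ (ρ' t) ^ 2 → ρ'' t ≤ 0 := by
    intro t ht hsq
    have hρt : 0 < ρ t := hpos t ht
    have ha2 : ((n:ℝ) - 1) * ((n:ℝ) - 2) * (1 - (ρ' t) ^ 2) / (ρ t) ^ 2 ≤ 0 := by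
      apply div_nonpos_of_nonpos_of_nonneg
      · have h1 : (0:ℝ) ≤ ((n:ℝ) - 1) * ((n:ℝ) - 2) := by nlinarith
        have h2 : 1 - (ρ' t) ^ 2 ≤ 0 := by linarith
        exact mul_nonpos_of_nonneg_of_nonpos h1 h2
      · positivity
    have ha1 : 0 ≤ -2 * ((n:ℝ) - 1) * ρ'' t / ρ t := by
      have := hscal t ht
      linarith
    rcases div_nonneg_iff.mp ha1 with ⟨hnum, _⟩ | ⟨_, hden⟩
    · nlinarith
    · linarith
  -- within-Icc derivatives become honest derivatives at interior points
  have hρ'D : ∀ x ∈ Ioo (0:ℝ) b, HasDerivAt ρ (ρ' x) x := by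
    intro x hx
    exact (hρ1 x (Ioo_subset_Icc_self hx)).hasDerivAt (Icc_mem_nhds hx.1 hx.2)
  have hρ''D : ∀ x ∈ Ioo (0:ℝ) b, HasDerivAt ρ' (ρ'' x) x := by
    intro x hx
    exact (hρ2 x (Ioo_subset_Icc_self hx)).hasDerivAt (Icc_mem_nhds hx.1 hx.2)
  -- ρ' ≤ 1 on [0,b]
  have hle1 : ∀ t ∈ Icc (0:ℝ) b, ρ' t ≤ 1 := by
    by_contra hcon
    push_neg at hcon
    obtain ⟨t₁, ht₁, ht₁gt⟩ := hcon
    set A : Set ℝ := {t | t ∈ Icc (0:ℝ) t₁ ∧ ρ' t = 1} with hA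
    have h0A : (0:ℝ) ∈ A := by
      constructor
      · exact ⟨le_refl 0, ht₁.1⟩
      · exact h0'
    have hAsub : A ⊆ Icc 0 t₁ := fun x hx => hx.1
    have hAclosed : IsClosed A := by
      have : A = Icc (0:ℝ) t₁ ∩ ρ' ⁻¹' {1} := by
        ext x; simp [hA, and_comm]
      rw [this]
      apply ContinuousOn.preimage_isClosed_of_isClosed
        (hρ'c.mono (Icc_subset_Icc le_rfl ht₁.2)) isClosed_Icc isClosed_singleton
    have hAbdd : BddAbove A := (bddAbove_Icc).mono hAsub
    have hts : sSup A ∈ A := hAclosed.csSup_mem ⟨0, h0A⟩ hAbdd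
    set c := sSup A with hc
    have hcIcc : c ∈ Icc (0:ℝ) t₁ := hts.1
    have hc1 : ρ' c = 1 := hts.2
    have hclt : c < t₁ := lt_of_le_of_ne hcIcc.2 (by intro h; rw [h] at hc1; rw [hc1] at ht₁gt; linarith)
    -- on [c, t₁], ρ' ≥ 1
    have hge : ∀ u ∈ Icc c t₁, 1 ≤ ρ' u := by
      by_contra hcon2
      push_neg at hcon2
      obtain ⟨u, hu, hult⟩ := hcon2
      have huc : c ≠ u := by rintro rfl; rw [hc1] at hult; linarith
      have hult₁ : u < t₁ := lt_of_le_of_ne hu.2 (by rintro rfl; linarith)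
      have hcont : ContinuousOn ρ' (Icc u t₁) := by
        apply hρ'c.mono
        apply Icc_subset_Icc _ ht₁.2
        exact le_trans hcIcc.1 hu.1
      have := intermediate_value_Ioo hult₁.le hcont
      have h1mem : (1:ℝ) ∈ Ioo (ρ' u) (ρ' t₁) := ⟨hult, ht₁gt⟩
      obtain ⟨v, hv, hv1⟩ := this h1mem
      have hvA : v ∈ A := by
        refine ⟨⟨?_, hv.2.le⟩, hv1⟩
        exact le_trans (le_trans hcIcc.1 hu.1) hv.1.le
      have : v ≤ c := le_csSup hAbdd hvA
      have : c < v := lt_of_le_of_lt (lt_of_le_of_ne hu.1 huc).le hv.1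
      linarith [le_csSup hAbdd hvA, lt_of_lt_of_le (lt_of_le_of_lt (lt_of_le_of_ne hu.1 huc).le hv.1) (le_csSup hAbdd hvA)]
    -- ρ' is antitone on [c, t₁]
    have hanti : AntitoneOn ρ' (Icc c t₁) := by
      apply antitoneOn_of_hasDerivWithinAt_nonpos (convex_Icc c t₁)
        (hρ'c.mono (Icc_subset_Icc (le_trans hcIcc.1 (le_refl c)) ht₁.2))
        (f' := ρ'')
      · intro x hx
        rw [interior_Icc] at hx
        have hxIoo : x ∈ Ioo (0:ℝ) b :=
          ⟨lt_of_le_of_lt hcIcc.1 hx.1, lt_of_lt_of_le hx.2 ht₁.2⟩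
        exact ((hρ''D x hxIoo).hasDerivWithinAt)
      · intro x hx
        rw [interior_Icc] at hx
        have hxIoo : x ∈ Ioo (0:ℝ) b :=
          ⟨lt_of_le_of_lt hcIcc.1 hx.1, lt_of_lt_of_le hx.2 ht₁.2⟩
        apply hsecond x hxIoo
        have := hge x ⟨hx.1.le, hx.2.le⟩
        nlinarith
    have := hanti (left_mem_Icc.mpr hclt.le) (right_mem_Icc.mpr hclt.le) hclt.le
    rw [hc1] at this
    linarith
  -- ρ' ≥ -1 on [0,b]
  have hgem1 : ∀ t ∈ Icc (0:ℝ) b, -1 ≤ ρ' t := by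
    by_contra hcon
    push_neg at hcon
    obtain ⟨t₁, ht₁, ht₁lt⟩ := hcon
    set A : Set ℝ := {t | t ∈ Icc t₁ b ∧ ρ' t = -1} with hA
    have hbA : b ∈ A := ⟨⟨ht₁.2, le_refl b⟩, hb'⟩
    have hAsub : A ⊆ Icc t₁ b := fun x hx => hx.1
    have hAclosed : IsClosed A := by
      have : A = Icc t₁ b ∩ ρ' ⁻¹' {-1} := by
        ext x; simp [hA, and_comm]
      rw [this]
      apply ContinuousOn.preimage_isClosed_of_isClosed
        (hρ'c.mono (Icc_subset_Icc ht₁.1 le_rfl)) isClosed_Icc isClosed_singleton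
    have hAbdd : BddBelow A := (bddBelow_Icc).mono hAsub
    have hts : sInf A ∈ A := hAclosed.csInf_mem ⟨b, hbA⟩ hAbdd
    set c := sInf A with hc
    have hcIcc : c ∈ Icc t₁ b := hts.1
    have hc1 : ρ' c = -1 := hts.2
    have hclt : t₁ < c := lt_of_le_of_ne hcIcc.1 (by intro h; rw [← h] at hc1; rw [hc1] at ht₁lt; linarith)
    -- on [t₁, c], ρ' ≤ -1
    have hge : ∀ u ∈ Icc t₁ c, ρ' u ≤ -1 := by
      by_contra hcon2
      push_neg at hcon2
      obtain ⟨u, hu, hult⟩ := hcon2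
      have huc : u ≠ c := by rintro rfl; rw [hc1] at hult; linarith
      have hult₁ : t₁ < u := lt_of_le_of_ne hu.1 (by rintro rfl; linarith)
      have hcont : ContinuousOn ρ' (Icc t₁ u) := by
        apply hρ'c.mono
        apply Icc_subset_Icc ht₁.1
        exact le_trans hu.2 hcIcc.2
      have := intermediate_value_Ioo hult₁.le hcont
      have h1mem : (-1:ℝ) ∈ Ioo (ρ' t₁) (ρ' u) := ⟨ht₁lt, hult⟩
      obtain ⟨v, hv, hv1⟩ := this h1mem
      have hvA : v ∈ A := by
        refine ⟨⟨hv.1.le, ?_⟩, hv1⟩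
        exact le_trans hv.2.le (le_trans hu.2 hcIcc.2)
      have h1 : c ≤ v := csInf_le hAbdd hvA
      have h2 : v < u := hv.2
      have h3 : u ≤ c := hu.2
      linarith
    -- ρ' is antitone on [t₁, c]
    have hanti : AntitoneOn ρ' (Icc t₁ c) := by
      apply antitoneOn_of_hasDerivWithinAt_nonpos (convex_Icc t₁ c)
        (hρ'c.mono (Icc_subset_Icc ht₁.1 hcIcc.2))
        (f' := ρ'')
      · intro x hx
        rw [interior_Icc] at hx
        have hxIoo : x ∈ Ioo (0:ℝ) b :=
          ⟨lt_of_le_of_lt ht₁.1 hx.1, lt_of_lt_of_le hx.2 hcIcc.2⟩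
        exact ((hρ''D x hxIoo).hasDerivWithinAt)
      · intro x hx
        rw [interior_Icc] at hx
        have hxIoo : x ∈ Ioo (0:ℝ) b :=
          ⟨lt_of_le_of_lt ht₁.1 hx.1, lt_of_lt_of_le hx.2 hcIcc.2⟩
        apply hsecond x hxIoo
        have := hge x ⟨hx.1.le, hx.2.le⟩
        nlinarith
    have := hanti (left_mem_Icc.mpr hclt.le) (right_mem_Icc.mpr hclt.le) hclt.le
    rw [hc1] at this
    linarith
  -- the primitive: S has derivative ρ^{n-1} at interior points, is continuous on [0,b]
  have hgc : ContinuousOn (fun τ => ρ τ ^ (n - 1)) (Icc 0 b) := hρc.pow (n - 1)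
  have hScont : ContinuousOn S (Icc 0 b) := by
    have h1 : ContinuousOn (fun x => ∫ τ in (0:ℝ)..x, ρ τ ^ (n - 1)) (Icc 0 b) := by
      have := intervalIntegral.continuousOn_primitive_interval
        (μ := volume) (f := fun τ => ρ τ ^ (n - 1)) (a := (0:ℝ)) (b := b) ?_
      · rwa [uIcc_of_le hb.le] at this
      · rw [uIcc_of_le hb.le]
        exact hgc.integrableOn_Icc
    exact ContinuousOn.congr h1 (fun x _ => hS x)
  have hSD : ∀ x ∈ Ioo (0:ℝ) b, HasDerivAt S (ρ x ^ (n - 1)) x := by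
    intro x hx
    have hxIcc : x ∈ Icc (0:ℝ) b := Ioo_subset_Icc_self hx
    have hnh : Icc (0:ℝ) b ∈ nhds x := Icc_mem_nhds hx.1 hx.2
    have hInt : IntervalIntegrable (fun τ => ρ τ ^ (n - 1)) volume 0 x := by
      apply ContinuousOn.intervalIntegrable
      rw [uIcc_of_le hx.1.le]
      exact hgc.mono (Icc_subset_Icc le_rfl hxIcc.2)
    have hmeas : StronglyMeasurableAtFilter (fun τ => ρ τ ^ (n - 1)) (nhds x) :=
      ⟨Icc 0 b, hnh, hgc.aestronglyMeasurable measurableSet_Icc⟩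
    have hca : ContinuousAt (fun τ => ρ τ ^ (n - 1)) x :=
      (hgc x hxIcc).continuousAt hnh
    have := intervalIntegral.integral_hasDerivAt_right hInt hmeas hca
    exact this.congr_of_eventuallyEq (Filter.Eventually.of_forall fun u => hS u)
  -- values of S at the endpoints
  have hS0 : S 0 = 0 := by rw [hS]; simp
  have hSb : S b = 1 := by rw [hS]; exact hvol
  -- F := ρ^n - n S is antitone on [0,b]
  have hF : AntitoneOn (fun t => ρ t ^ n - (n:ℝ) * S t) (Icc 0 b) := by
    apply antitoneOn_of_hasDerivWithinAt_nonpos (convex_Icc 0 b)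
      ((hρc.pow n).sub (continuousOn_const.mul hScont))
      (f' := fun x => (n:ℝ) * ρ x ^ (n - 1) * ρ' x - (n:ℝ) * ρ x ^ (n - 1))
    · intro x hx
      rw [interior_Icc] at hx
      exact (((hρ'D x hx).pow n).sub ((hSD x hx).const_mul (n:ℝ))).hasDerivWithinAt
    · intro x hx
      rw [interior_Icc] at hx
      have h1 : 0 ≤ ρ x ^ (n - 1) := pow_nonneg (hρnn x (Ioo_subset_Icc_self hx)) _
      have h2 : ρ' x ≤ 1 := hle1 x (Ioo_subset_Icc_self hx)
      nlinarith [mul_nonneg (mul_nonneg hnpos.le h1) (sub_nonneg.mpr h2)]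
  -- G := ρ^n + n S is monotone on [0,b]
  have hG : MonotoneOn (fun t => ρ t ^ n + (n:ℝ) * S t) (Icc 0 b) := by
    apply monotoneOn_of_hasDerivWithinAt_nonneg (convex_Icc 0 b)
      ((hρc.pow n).add (continuousOn_const.mul hScont))
      (f' := fun x => (n:ℝ) * ρ x ^ (n - 1) * ρ' x + (n:ℝ) * ρ x ^ (n - 1))
    · intro x hx
      rw [interior_Icc] at hx
      exact (((hρ'D x hx).pow n).add ((hSD x hx).const_mul (n:ℝ))).hasDerivWithinAt
    · intro x hx
      rw [interior_Icc] at hx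
      have h1 : 0 ≤ ρ x ^ (n - 1) := pow_nonneg (hρnn x (Ioo_subset_Icc_self hx)) _
      have h2 : -1 ≤ ρ' x := hgem1 x (Ioo_subset_Icc_self hx)
      nlinarith [mul_nonneg (mul_nonneg hnpos.le h1) (by linarith : (0:ℝ) ≤ ρ' x + 1)]
  -- the two pointwise bounds
  have hbound1 : ∀ t ∈ Icc (0:ℝ) b, ρ t ^ n ≤ (n:ℝ) * S t := by
    intro t ht
    have := hF (left_mem_Icc.mpr hb.le) ht ht.1
    simp only [h00, hS0, zero_pow hn0] at this
    linarith
  have hbound2 : ∀ t ∈ Icc (0:ℝ) b, ρ t ^ n ≤ (n:ℝ) * (1 - S t) := by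
    intro t ht
    have := hG ht (right_mem_Icc.mpr hb.le) ht.2
    simp only [hbb, hSb, zero_pow hn0] at this
    linarith
  -- conclude
  intro s hs
  have htT : T s ∈ Icc (0:ℝ) b := hTmem s hs
  have hSt : S (T s) = s := hST s hs
  have hρT : 0 ≤ ρ (T s) := hρnn _ htT
  split_ifs with hhalf
  · have h1 : ρ (T s) ^ n ≤ (n:ℝ) * s := by
      have := hbound1 _ htT; rwa [hSt] at this
    have h2 : (0:ℝ) ≤ (n:ℝ) * s := mul_nonneg hnpos.le hs.1
    calc ρ (T s) = (ρ (T s) ^ n) ^ ((1:ℝ)/n) := by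
          rw [one_div, Real.pow_rpow_inv_natCast hρT hn0]
      _ ≤ ((n:ℝ) * s) ^ ((1:ℝ)/n) := by
          apply Real.rpow_le_rpow (by positivity) h1 (by positivity)
  · have h1 : ρ (T s) ^ n ≤ (n:ℝ) * (1 - s) := by
      have := hbound2 _ htT; rwa [hSt] at this
    have h2 : (0:ℝ) ≤ (n:ℝ) * (1 - s) := mul_nonneg hnpos.le (by linarith [hs.2])
    calc ρ (T s) = (ρ (T s) ^ n) ^ ((1:ℝ)/n) := by
          rw [one_div, Real.pow_rpow_inv_natCast hρT hn0]
      _ ≤ ((n:ℝ) * (1 - s)) ^ ((1:ℝ)/n) := by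
          apply Real.rpow_le_rpow (by positivity) h1 (by positivity)
end

section
/- For all integers n ≥ 2 and k ≥ 1, there exists a constant D_k > 0 (depending only on n and k) with the following property. Let b > 0 and let ρ : [0,b] → ℝ be a C² function with ρ(0) = ρ(b) = 0, ρ'(0) = 1, ρ'(b) = -1, ρ > 0 on (0,b), ∫₀ᵇ ρ^{n-1} = 1, and with the scalar curvature expression -2(n-1)·ρ''/ρ + (n-1)(n-2)·(1-ρ'²)/ρ² non-negative on (0,b). Let s(t) = ∫₀ᵗ ρ^{n-1} dτ with inverse t(s) and set Φ(s) = ρ(t(s)). Then for every nonzero polynomial φ of degree at most k, ∫₀¹ Φ(s)^{2n-2}·(φ'(s))² ds ≤ D_k·∫₀¹ φ(s)² ds. -/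
open Set MeasureTheory Polynomial


noncomputable def pfun (k : ℕ) (a : Fin (k+1) → ℝ) : Polynomial ℝ :=
  ∑ i : Fin (k+1), Polynomial.C (a i) * Polynomial.X ^ (i : ℕ)

lemma pfun_eval (k : ℕ) (a : Fin (k+1) → ℝ) (s : ℝ) :
    (pfun k a).eval s = ∑ i : Fin (k+1), a i * s ^ (i:ℕ) := by
  simp [pfun, Polynomial.eval_finset_sum]

lemma pfun_deriv (k : ℕ) (a : Fin (k+1) → ℝ) :
    Polynomial.derivative (pfun k a)
      = ∑ i : Fin (k+1), Polynomial.C (a i * i) * Polynomial.X ^ ((i:ℕ) - 1) := by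
  simp only [pfun, map_sum, Polynomial.derivative_C_mul_X_pow]

lemma pfun_smul (k : ℕ) (c : ℝ) (a : Fin (k+1) → ℝ) :
    pfun k (c • a) = Polynomial.C c * pfun k a := by
  simp [pfun, Finset.mul_sum, mul_assoc, Polynomial.C_mul]

lemma pfun_coeff (k : ℕ) (a : Fin (k+1) → ℝ) (i : Fin (k+1)) :
    (pfun k a).coeff i = a i := by
  simp only [pfun, Polynomial.finset_sum_coeff, Polynomial.coeff_C_mul,
    Polynomial.coeff_X_pow]
  rw [Finset.sum_eq_single i]
  · simp
  · intro j _ hj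
    have : ¬ ((i:ℕ) = (j:ℕ)) := fun h => hj (Fin.ext h.symm)
    simp [this]
  · simp

lemma pfun_eq (k : ℕ) (φ : Polynomial ℝ) (h : φ.natDegree ≤ k) :
    pfun k (fun i => φ.coeff i) = φ := by
  conv_rhs => rw [φ.as_sum_range' (k+1) (Nat.lt_succ_of_le h)]
  rw [pfun, Fin.sum_univ_eq_sum_range (fun i => Polynomial.C (φ.coeff i) * Polynomial.X ^ i)]
  exact Finset.sum_congr rfl fun i _ => (Polynomial.C_mul_X_pow_eq_monomial)

lemma poly_integral_pos (Q : Polynomial ℝ) (hQ : Q ≠ 0) :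
    0 < ∫ s in (0:ℝ)..1, (Q.eval s)^2 := by
  have hcont : Continuous fun s : ℝ => (Q.eval s)^2 := (Polynomial.continuous Q).pow 2
  have hnn : 0 ≤ ∫ s in (0:ℝ)..1, (Q.eval s)^2 :=
    intervalIntegral.integral_nonneg (by norm_num) (fun s _ => sq_nonneg _)
  rcases hnn.lt_or_eq with h | h
  · exact h
  exfalso
  have hroot : ∀ s ∈ Ioo (0:ℝ) 1, Q.eval s = 0 := by
    have hint : IntegrableOn (fun s => (Q.eval s)^2) (Ioc 0 1) := hcont.integrableOn_Ioc
    rw [intervalIntegral.integral_of_le (by norm_num : (0:ℝ) ≤ 1)] at h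
    have hae : (fun s => (Q.eval s)^2) =ᵐ[volume.restrict (Ioc (0:ℝ) 1)] 0 :=
      (MeasureTheory.integral_eq_zero_iff_of_nonneg (fun s => sq_nonneg _) hint).mp h.symm
    have hnull : volume ({s : ℝ | (Q.eval s)^2 ≠ 0} ∩ Ioc 0 1) = 0 := by
      have := MeasureTheory.ae_iff.mp hae
      rwa [Measure.restrict_apply] at this
      exact (hcont.measurable (measurableSet_singleton 0).compl)
    intro s hs
    by_contra hne
    have hU : IsOpen ({s : ℝ | (Q.eval s)^2 ≠ 0} ∩ Ioo 0 1) :=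
      (isOpen_compl_singleton.preimage hcont).inter isOpen_Ioo
    have hUpos : 0 < volume ({s : ℝ | (Q.eval s)^2 ≠ 0} ∩ Ioo 0 1) :=
      hU.measure_pos volume ⟨s, ⟨pow_ne_zero 2 hne, hs⟩⟩
    exact absurd (measure_mono_null (inter_subset_inter_right _ Ioo_subset_Ioc_self) hnull)
      hUpos.ne'
  exact hQ (Q.eq_zero_of_infinite_isRoot
    ((Set.Ioo_infinite (by norm_num : (0:ℝ) < 1)).mono (fun s hs => hroot s hs)))

lemma poly_rayleigh (k : ℕ) : ∃ C : ℝ, 0 < C ∧ ∀ φ : Polynomial ℝ, φ ≠ 0 → φ.natDegree ≤ k →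
    (∫ s in (0:ℝ)..1, (Polynomial.eval s (Polynomial.derivative φ))^2)
      ≤ C * ∫ s in (0:ℝ)..1, (Polynomial.eval s φ)^2 := by
  classical
  set F : (Fin (k+1) → ℝ) → ℝ := fun a =>
    ∫ s in (0:ℝ)..1, (∑ i : Fin (k+1), a i * (i:ℕ) * s ^ ((i:ℕ) - 1))^2 with hF
  set G : (Fin (k+1) → ℝ) → ℝ := fun a =>
    ∫ s in (0:ℝ)..1, (∑ i : Fin (k+1), a i * s ^ (i:ℕ))^2 with hG
  -- F and G in terms of polynomials
  have hFeq : ∀ a, F a = ∫ s in (0:ℝ)..1,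
      (Polynomial.eval s (Polynomial.derivative (pfun k a)))^2 := by
    intro a
    simp only [hF]
    congr 1
    ext s
    rw [pfun_deriv, Polynomial.eval_finset_sum]
    simp [mul_assoc]
  have hGeq : ∀ a, G a = ∫ s in (0:ℝ)..1, (Polynomial.eval s (pfun k a))^2 := by
    intro a
    simp only [hG]
    congr 1
    ext s
    rw [pfun_eval]
  -- continuity
  have hFc : Continuous F := by
    apply intervalIntegral.continuous_parametric_intervalIntegral_of_continuous'
    apply Continuous.pow
    apply continuous_finset_sum
    intro i _
    exact ((continuous_apply i).comp continuous_fst).mul continuous_const |>.mul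
      ((continuous_snd.pow _))
  have hGc : Continuous G := by
    apply intervalIntegral.continuous_parametric_intervalIntegral_of_continuous'
    apply Continuous.pow
    apply continuous_finset_sum
    intro i _
    exact ((continuous_apply i).comp continuous_fst).mul (continuous_snd.pow _)
  -- homogeneity
  have hFh : ∀ (c : ℝ) (a), F (c • a) = c^2 * F a := by
    intro c a
    simp only [hF]
    rw [← intervalIntegral.integral_const_mul]
    congr 1
    ext s
    rw [← mul_pow, Finset.mul_sum]
    congr 1
    refine Finset.sum_congr rfl fun i _ => ?_
    simp [Pi.smul_apply, smul_eq_mul]; ring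
  have hGh : ∀ (c : ℝ) (a), G (c • a) = c^2 * G a := by
    intro c a
    simp only [hG]
    rw [← intervalIntegral.integral_const_mul]
    congr 1
    ext s
    rw [← mul_pow, Finset.mul_sum]
    congr 1
    refine Finset.sum_congr rfl fun i _ => ?_
    simp [Pi.smul_apply, smul_eq_mul]; ring
  -- nonnegativity
  have hFnn : ∀ a, 0 ≤ F a := fun a =>
    intervalIntegral.integral_nonneg (by norm_num) (fun s _ => sq_nonneg _)
  have hGnn : ∀ a, 0 ≤ G a := fun a =>
    intervalIntegral.integral_nonneg (by norm_num) (fun s _ => sq_nonneg _)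
  -- compact sphere
  have hK : IsCompact (Metric.sphere (0 : Fin (k+1) → ℝ) 1) := isCompact_sphere 0 1
  have hne : (Metric.sphere (0 : Fin (k+1) → ℝ) 1).Nonempty := by
    refine ⟨fun _ => (1:ℝ), ?_⟩
    simp [Metric.mem_sphere, dist_eq_norm, pi_norm_const]
  obtain ⟨amin, haminK, hmin⟩ := hK.exists_isMinOn hne hGc.continuousOn
  obtain ⟨amax, hamaxK, hmax⟩ := hK.exists_isMaxOn hne hFc.continuousOn
  set m := G amin with hm
  set M := F amax with hM
  have hmpos : 0 < m := by
    have hamin0 : amin ≠ 0 := by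
      intro h0
      rw [h0] at haminK
      simp at haminK
    have hp0 : pfun k amin ≠ 0 := by
      intro h0
      apply hamin0
      funext i
      have := pfun_coeff k amin i
      rw [h0] at this
      simpa using this.symm
    rw [hm, hGeq]
    exact poly_integral_pos _ hp0
  have hMnn : 0 ≤ M := hFnn amax
  refine ⟨M / m + 1, by positivity, ?_⟩
  intro φ hφ hdeg
  set a : Fin (k+1) → ℝ := fun i => φ.coeff i with ha
  have hpa : pfun k a = φ := pfun_eq k φ hdeg
  have ha0 : a ≠ 0 := by
    intro h0
    apply hφ
    rw [← hpa, h0]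
    simp [pfun]
  have hr : 0 < ‖a‖ := norm_pos_iff.mpr ha0
  set r := ‖a‖ with hrdef
  set u := r⁻¹ • a with hu
  have huK : u ∈ Metric.sphere (0 : Fin (k+1) → ℝ) 1 := by
    simp [hu, Metric.mem_sphere, dist_eq_norm, norm_smul, abs_of_pos (inv_pos.mpr hr),
      inv_mul_cancel₀ hr.ne']
    rw [abs_of_pos hr, ← hrdef, inv_mul_cancel₀ hr.ne']
  have hau : a = r • u := by rw [hu, smul_inv_smul₀ hr.ne']
  have hFa : F a = r^2 * F u := by rw [hau]; exact hFh _ _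
  have hGa : G a = r^2 * G u := by rw [hau]; exact hGh _ _
  have hFu : F u ≤ M := hmax huK
  have hGu : m ≤ G u := hmin huK
  have key : F a ≤ (M / m + 1) * G a := by
    have h1 : F a ≤ r^2 * M := by
      rw [hFa]; exact mul_le_mul_of_nonneg_left hFu (sq_nonneg _)
    have h2 : r^2 * m ≤ G a := by
      rw [hGa]; exact mul_le_mul_of_nonneg_left hGu (sq_nonneg _)
    have h3 : r^2 * M ≤ (M / m) * G a := by
      calc r^2 * M = (M / m) * (r^2 * m) := by
            field_simp
        _ ≤ (M / m) * G a := mul_le_mul_of_nonneg_left h2 (by positivity)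
    calc F a ≤ (M / m) * G a := h1.trans h3
      _ ≤ (M / m + 1) * G a := by
          have := hGnn a
          nlinarith
  calc (∫ s in (0:ℝ)..1, (Polynomial.eval s (Polynomial.derivative φ))^2)
      = F a := by rw [hFeq, hpa]
    _ ≤ (M / m + 1) * G a := key
    _ = (M / m + 1) * ∫ s in (0:ℝ)..1, (Polynomial.eval s φ)^2 := by rw [hGeq, hpa]

section Geo
variable {n : ℕ} {b : ℝ} {ρ ρ' ρ'' : ℝ → ℝ}

lemma deriv_bound (hn : 2 ≤ n) (hb : 0 < b)
    (hd1 : ∀ t ∈ Icc (0:ℝ) b, HasDerivWithinAt ρ (ρ' t) (Icc 0 b) t)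
    (hd2 : ∀ t ∈ Icc (0:ℝ) b, HasDerivWithinAt ρ' (ρ'' t) (Icc 0 b) t)
    (hρ'0 : ρ' 0 = 1) (hρ'b : ρ' b = -1)
    (hpos : ∀ t ∈ Ioo (0:ℝ) b, 0 < ρ t)
    (hscal : ∀ t ∈ Ioo (0:ℝ) b,
      0 ≤ -2 * ((n:ℝ) - 1) * ρ'' t / ρ t
          + ((n:ℝ) - 1) * ((n:ℝ) - 2) * (1 - (ρ' t) ^ 2) / (ρ t) ^ 2) :
    ∀ t ∈ Icc (0:ℝ) b, ρ' t ∈ Icc (-1:ℝ) 1 := by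
  have hn2 : (2:ℝ) ≤ (n:ℝ) := by exact_mod_cast hn
  have hρ'c : ContinuousOn ρ' (Icc 0 b) := fun t ht => (hd2 t ht).continuousWithinAt
  -- concavity where |ρ'| ≥ 1
  have hconc : ∀ t ∈ Ioo (0:ℝ) b, 1 ≤ (ρ' t)^2 → ρ'' t ≤ 0 := by
    intro t ht hsq
    have hρ : 0 < ρ t := hpos t ht
    have hc : (0:ℝ) ≤ ((n:ℝ) - 1) * ((n:ℝ) - 2) := by nlinarith
    have hB : ((n:ℝ) - 1) * ((n:ℝ) - 2) * (1 - (ρ' t)^2) / (ρ t)^2 ≤ 0 :=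
      div_nonpos_iff.mpr (Or.inr ⟨mul_nonpos_of_nonneg_of_nonpos hc (by linarith), sq_nonneg _⟩)
    have hs := hscal t ht
    have hA : ρ'' t / ρ t ≤ 0 := by
      rw [mul_div_assoc] at hs
      by_contra hA
      push_neg at hA
      nlinarith [mul_pos (show (0:ℝ) < (n:ℝ) - 1 by linarith) hA]
    nlinarith [mul_nonneg (neg_nonneg.mpr hA) hρ.le, div_mul_cancel₀ (ρ'' t) hρ.ne']
  -- upper bound
  have hup : ∀ t ∈ Icc (0:ℝ) b, ρ' t ≤ 1 := by
    by_contra hcon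
    push_neg at hcon
    obtain ⟨t₁, ht₁, h1⟩ := hcon
    set A := {t | t ∈ Icc 0 t₁ ∧ ρ' t ≤ 1} with hA
    have h0A : (0:ℝ) ∈ A := ⟨⟨le_refl 0, ht₁.1⟩, by rw [hρ'0]⟩
    have hAne : A.Nonempty := ⟨0, h0A⟩
    have hAbdd : BddAbove A := ⟨t₁, fun x hx => hx.1.2⟩
    set t₀ := sSup A with ht₀
    have ht₀0 : 0 ≤ t₀ := le_csSup hAbdd h0A
    have ht₀1 : t₀ ≤ t₁ := csSup_le hAne (fun x hx => hx.1.2)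
    have ht₀b : t₀ ∈ Icc (0:ℝ) b := ⟨ht₀0, ht₀1.trans ht₁.2⟩
    have ht₀cl : t₀ ∈ closure A := csSup_mem_closure hAne hAbdd
    have hρ't₀ : ρ' t₀ ≤ 1 := by
      haveI : (nhdsWithin t₀ A).NeBot := mem_closure_iff_nhdsWithin_neBot.mp ht₀cl
      have hcw : ContinuousWithinAt ρ' A t₀ :=
        (hρ'c t₀ ht₀b).mono (fun x hx => ⟨hx.1.1, hx.1.2.trans ht₁.2⟩)
      exact le_of_tendsto hcw.tendsto (eventually_nhdsWithin_of_forall (fun x hx => hx.2))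
    have hgt : ∀ t, t₀ < t → t ≤ t₁ → 1 < ρ' t := by
      intro t htt ht1
      by_contra hle
      push_neg at hle
      have : t ∈ A := ⟨⟨ht₀0.trans htt.le, ht1⟩, hle⟩
      exact absurd (le_csSup hAbdd this) (not_le.mpr htt)
    have hanti : AntitoneOn ρ' (Icc t₀ t₁) := by
      have hsub : Icc t₀ t₁ ⊆ Icc 0 b := Icc_subset_Icc ht₀0 ht₁.2
      have hderiv : ∀ x ∈ interior (Icc t₀ t₁), HasDerivAt ρ' (ρ'' x) x := by
        intro x hx
        rw [interior_Icc] at hx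
        have hxo : x ∈ Ioo (0:ℝ) b := ⟨ht₀0.trans_lt hx.1, hx.2.trans_le ht₁.2⟩
        exact (hd2 x ⟨hxo.1.le, hxo.2.le⟩).hasDerivAt (Icc_mem_nhds hxo.1 hxo.2)
      refine antitoneOn_of_deriv_nonpos (convex_Icc _ _) (hρ'c.mono hsub) ?_ ?_
      · exact fun x hx => (hderiv x hx).differentiableAt.differentiableWithinAt
      · intro x hx
        rw [(hderiv x hx).deriv]
        rw [interior_Icc] at hx
        have hxo : x ∈ Ioo (0:ℝ) b := ⟨ht₀0.trans_lt hx.1, hx.2.trans_le ht₁.2⟩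
        have h1x : 1 < ρ' x := hgt x hx.1 hx.2.le
        exact hconc x hxo (by nlinarith)
    have : ρ' t₁ ≤ ρ' t₀ :=
      hanti ⟨le_refl t₀, ht₀1⟩ ⟨ht₀1, le_refl t₁⟩ ht₀1
    linarith
  -- lower bound
  have hlo : ∀ t ∈ Icc (0:ℝ) b, -1 ≤ ρ' t := by
    by_contra hcon
    push_neg at hcon
    obtain ⟨t₁, ht₁, h1⟩ := hcon
    set A := {t | t ∈ Icc t₁ b ∧ -1 ≤ ρ' t} with hA
    have hbA : b ∈ A := ⟨⟨ht₁.2, le_refl b⟩, by rw [hρ'b]⟩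
    have hAne : A.Nonempty := ⟨b, hbA⟩
    have hAbdd : BddBelow A := ⟨t₁, fun x hx => hx.1.1⟩
    set t₀ := sInf A with ht₀
    have ht₀1 : t₁ ≤ t₀ := le_csInf hAne (fun x hx => hx.1.1)
    have ht₀b' : t₀ ≤ b := csInf_le hAbdd hbA
    have ht₀b : t₀ ∈ Icc (0:ℝ) b := ⟨ht₁.1.trans ht₀1, ht₀b'⟩
    have ht₀cl : t₀ ∈ closure A := csInf_mem_closure hAne hAbdd
    have hρ't₀ : -1 ≤ ρ' t₀ := by
      haveI : (nhdsWithin t₀ A).NeBot := mem_closure_iff_nhdsWithin_neBot.mp ht₀cl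
      have hcw : ContinuousWithinAt ρ' A t₀ :=
        (hρ'c t₀ ht₀b).mono (fun x hx => ⟨ht₁.1.trans hx.1.1, hx.1.2⟩)
      exact ge_of_tendsto hcw.tendsto (eventually_nhdsWithin_of_forall (fun x hx => hx.2))
    have hgt : ∀ t, t₁ ≤ t → t < t₀ → ρ' t < -1 := by
      intro t ht1 htt
      by_contra hle
      push_neg at hle
      have : t ∈ A := ⟨⟨ht1, htt.le.trans ht₀b'⟩, hle⟩
      exact absurd (csInf_le hAbdd this) (not_le.mpr htt)
    have hanti : AntitoneOn ρ' (Icc t₁ t₀) := by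
      have hsub : Icc t₁ t₀ ⊆ Icc 0 b := Icc_subset_Icc ht₁.1 ht₀b'
      have hderiv : ∀ x ∈ interior (Icc t₁ t₀), HasDerivAt ρ' (ρ'' x) x := by
        intro x hx
        rw [interior_Icc] at hx
        have hxo : x ∈ Ioo (0:ℝ) b := ⟨ht₁.1.trans_lt hx.1, hx.2.trans_le ht₀b'⟩
        exact (hd2 x ⟨hxo.1.le, hxo.2.le⟩).hasDerivAt (Icc_mem_nhds hxo.1 hxo.2)
      refine antitoneOn_of_deriv_nonpos (convex_Icc _ _) (hρ'c.mono hsub) ?_ ?_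
      · exact fun x hx => (hderiv x hx).differentiableAt.differentiableWithinAt
      · intro x hx
        rw [(hderiv x hx).deriv]
        rw [interior_Icc] at hx
        have hxo : x ∈ Ioo (0:ℝ) b := ⟨ht₁.1.trans_lt hx.1, hx.2.trans_le ht₀b'⟩
        have h1x : ρ' x < -1 := hgt x hx.1.le hx.2
        exact hconc x hxo (by nlinarith)
    have : ρ' t₀ ≤ ρ' t₁ :=
      hanti ⟨le_refl t₁, ht₀1⟩ ⟨ht₀1, le_refl t₀⟩ ht₀1
    linarith
  exact fun t ht => ⟨hlo t ht, hup t ht⟩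

end Geo

section Geo2
variable {n : ℕ} {b : ℝ} {ρ ρ' : ℝ → ℝ}

lemma S_lower (hn : 2 ≤ n) (hb : 0 < b)
    (hd1 : ∀ t ∈ Icc (0:ℝ) b, HasDerivWithinAt ρ (ρ' t) (Icc 0 b) t)
    (hρ0 : ρ 0 = 0) (hρb : ρ b = 0)
    (hpos : ∀ t ∈ Ioo (0:ℝ) b, 0 < ρ t)
    (hder : ∀ t ∈ Icc (0:ℝ) b, ρ' t ∈ Icc (-1:ℝ) 1) :
    ∀ t ∈ Icc (0:ℝ) b, ρ t ^ n ≤ n * ∫ τ in (0:ℝ)..t, ρ τ ^ (n-1) := by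
  have hρc : ContinuousOn ρ (Icc 0 b) := fun t ht => (hd1 t ht).continuousWithinAt
  have hρnn : ∀ t ∈ Icc (0:ℝ) b, 0 ≤ ρ t := by
    intro t ht
    rcases ht.1.eq_or_lt with h | h
    · rw [← h, hρ0]
    rcases ht.2.eq_or_lt with h' | h'
    · rw [h', hρb]
    · exact (hpos t ⟨h, h'⟩).le
  have hg : AntitoneOn (fun t => ρ t - t) (Icc 0 b) := by
    refine antitoneOn_of_deriv_nonpos (convex_Icc _ _)
      (hρc.sub continuousOn_id) ?_ ?_
    · intro x hx
      rw [interior_Icc] at hx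
      exact (((hd1 x ⟨hx.1.le, hx.2.le⟩).hasDerivAt
        (Icc_mem_nhds hx.1 hx.2)).sub (hasDerivAt_id x)).differentiableAt.differentiableWithinAt
    · intro x hx
      rw [interior_Icc] at hx
      have hD : HasDerivAt (fun t => ρ t - t) (ρ' x - 1) x :=
        ((hd1 x ⟨hx.1.le, hx.2.le⟩).hasDerivAt (Icc_mem_nhds hx.1 hx.2)).sub (hasDerivAt_id x)
      rw [hD.deriv]
      have := (hder x ⟨hx.1.le, hx.2.le⟩).2
      linarith
  have hle : ∀ t ∈ Icc (0:ℝ) b, ρ t ≤ t := by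
    intro t ht
    have := hg (left_mem_Icc.mpr hb.le) ht ht.1
    simp only [hρ0] at this
    linarith
  intro t ht
  set c := t - ρ t with hc
  have hc0 : 0 ≤ c := by have := hle t ht; simp [hc]; linarith
  have hct : c ≤ t := by have := hρnn t ht; simp [hc]; linarith
  have hint : ∀ u v : ℝ, 0 ≤ u → v ≤ b → u ≤ v →
      IntervalIntegrable (fun τ => ρ τ ^ (n-1)) volume u v := by
    intro u v hu hv huv
    apply ContinuousOn.intervalIntegrable
    apply (hρc.mono ?_).pow
    rw [uIcc_of_le huv]
    exact Icc_subset_Icc hu hv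
  have hsplit : (∫ τ in (0:ℝ)..t, ρ τ ^ (n-1))
      = (∫ τ in (0:ℝ)..c, ρ τ ^ (n-1)) + ∫ τ in c..t, ρ τ ^ (n-1) :=
    (intervalIntegral.integral_add_adjacent_intervals
      (hint 0 c (le_refl 0) (hct.trans ht.2) hc0) (hint c t hc0 ht.2 hct)).symm
  have h1 : 0 ≤ ∫ τ in (0:ℝ)..c, ρ τ ^ (n-1) :=
    intervalIntegral.integral_nonneg hc0
      (fun τ hτ => pow_nonneg (hρnn τ ⟨hτ.1, (hτ.2.trans hct).trans ht.2⟩) _)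
  have h2 : (∫ τ in c..t, (τ + (ρ t - t)) ^ (n-1)) ≤ ∫ τ in c..t, ρ τ ^ (n-1) := by
    apply intervalIntegral.integral_mono_on hct
    · apply ContinuousOn.intervalIntegrable
      exact ((continuousOn_id.add continuousOn_const).pow _)
    · exact hint c t hc0 ht.2 hct
    · intro τ hτ
      have hτ0 : 0 ≤ τ + (ρ t - t) := by
        have := hτ.1; simp only [hc] at this; linarith
      have hτle : τ + (ρ t - t) ≤ ρ τ := by
        have hmem : τ ∈ Icc (0:ℝ) b := ⟨hc0.trans hτ.1, hτ.2.trans ht.2⟩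
        have h := hg hmem ht hτ.2
        dsimp only at h
        linarith
      exact pow_le_pow_left₀ hτ0 hτle _
  have h3 : (∫ τ in c..t, (τ + (ρ t - t)) ^ (n-1)) = ρ t ^ n / n := by
    rw [intervalIntegral.integral_comp_add_right (fun x => x ^ (n-1)) (ρ t - t)]
    have hcd : c + (ρ t - t) = 0 := by rw [hc]; ring
    have htd : t + (ρ t - t) = ρ t := by ring
    rw [hcd, htd, integral_pow]
    rw [Nat.sub_add_cancel (by omega : 1 ≤ n), zero_pow (by omega : n ≠ 0), sub_zero,
      Nat.cast_sub (by omega : 1 ≤ n)]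
    push_cast
    ring_nf
  have hn0 : (0:ℝ) < n := by positivity
  rw [hsplit]
  have := h3 ▸ h2
  have hfin : ρ t ^ n / n ≤ ∫ τ in c..t, ρ τ ^ (n-1) := this
  calc ρ t ^ n = (n:ℝ) * (ρ t ^ n / n) := by field_simp
    _ ≤ (n:ℝ) * ((∫ τ in (0:ℝ)..c, ρ τ ^ (n-1)) + ∫ τ in c..t, ρ τ ^ (n-1)) := by
        apply mul_le_mul_of_nonneg_left _ hn0.le
        linarith
  
end Geo2

/-- For integers `n ≥ 2`, `k ≥ 1` there is a constant `D_k > 0`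
(depending only on `n` and `k`) such that for every unit-volume rotationally symmetric
profile `ρ` on `[0,b]` with non-negative scalar curvature, writing `Φ(s) = ρ(t(s))` in
the coordinate `s(t) = ∫₀ᵗ ρ^{n-1}`, every nonzero polynomial `φ` of degree at most `k`
satisfies `∫₀¹ Φ^{2n-2} (φ')² ds ≤ D_k ∫₀¹ φ² ds`. -/
theorem rayleigh_bound_of_nonneg_scal (n k : ℕ) (hn : 2 ≤ n) (hk : 1 ≤ k) :
    ∃ D : ℝ, 0 < D ∧
      ∀ (b : ℝ), 0 < b → ∀ (ρ ρ' ρ'' S T : ℝ → ℝ),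
        (∀ t ∈ Icc (0:ℝ) b, HasDerivWithinAt ρ (ρ' t) (Icc 0 b) t) →
        (∀ t ∈ Icc (0:ℝ) b, HasDerivWithinAt ρ' (ρ'' t) (Icc 0 b) t) →
        ContinuousOn ρ'' (Icc 0 b) →
        ρ 0 = 0 → ρ b = 0 → ρ' 0 = 1 → ρ' b = -1 →
        (∀ t ∈ Ioo (0:ℝ) b, 0 < ρ t) →
        (∫ τ in (0:ℝ)..b, ρ τ ^ (n - 1)) = 1 →
        (∀ t ∈ Ioo (0:ℝ) b,
          0 ≤ -2 * ((n:ℝ) - 1) * ρ'' t / ρ t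
              + ((n:ℝ) - 1) * ((n:ℝ) - 2) * (1 - (ρ' t) ^ 2) / (ρ t) ^ 2) →
        (∀ t, S t = ∫ τ in (0:ℝ)..t, ρ τ ^ (n - 1)) →
        (∀ s ∈ Icc (0:ℝ) 1, T s ∈ Icc 0 b) →
        (∀ t ∈ Icc (0:ℝ) b, T (S t) = t) →
        (∀ s ∈ Icc (0:ℝ) 1, S (T s) = s) →
        ∀ φ : Polynomial ℝ, φ ≠ 0 → φ.natDegree ≤ k →
          (∫ s in (0:ℝ)..1,
              (ρ (T s)) ^ (2 * n - 2)
                * (Polynomial.eval s (Polynomial.derivative φ)) ^ 2)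
            ≤ D * ∫ s in (0:ℝ)..1, (Polynomial.eval s φ) ^ 2 := by
  obtain ⟨C, hC, hpoly⟩ := poly_rayleigh k
  refine ⟨2^(2*n-2) * C, by positivity, ?_⟩
  intro b hb ρ ρ' ρ'' S T hd1 hd2 hρ''c hρ0 hρb hρ'0 hρ'b hpos hvol hscal hS hTmem hTS hST φ hφ hdeg
  have hder := deriv_bound hn hb hd1 hd2 hρ'0 hρ'b hpos hscal
  have hSl := S_lower hn hb hd1 hρ0 hρb hpos hder
  have hρc : ContinuousOn ρ (Icc 0 b) := fun t ht => (hd1 t ht).continuousWithinAt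
  have hρnn : ∀ t ∈ Icc (0:ℝ) b, 0 ≤ ρ t := by
    intro t ht
    rcases ht.1.eq_or_lt with h | h
    · rw [← h, hρ0]
    rcases ht.2.eq_or_lt with h' | h'
    · rw [h', hρb]
    · exact (hpos t ⟨h, h'⟩).le
  -- pointwise bound on Φ
  have hΦ : ∀ s ∈ Icc (0:ℝ) 1, ρ (T s) ∈ Icc (0:ℝ) 2 := by
    intro s hs
    have htm := hTmem s hs
    refine ⟨hρnn _ htm, ?_⟩
    have h := hSl (T s) htm
    rw [← hS (T s), hST s hs] at h
    have h2 : ρ (T s) ^ n ≤ (2:ℝ) ^ n := by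
      have hn2 : (n:ℝ) ≤ 2 ^ n := by exact_mod_cast (Nat.lt_two_pow_self (n := n)).le
      have : (n:ℝ) * s ≤ (n:ℝ) * 1 := by
        apply mul_le_mul_of_nonneg_left hs.2 (by positivity)
      calc ρ (T s) ^ n ≤ (n:ℝ) * s := h
        _ ≤ (n:ℝ) := by linarith
        _ ≤ 2 ^ n := by exact_mod_cast hn2
    exact le_of_pow_le_pow_left₀ (by omega) (by norm_num) h2
  -- strict monotonicity of S
  have hintpow : ∀ u v : ℝ, 0 ≤ u → v ≤ b → u ≤ v →
      IntervalIntegrable (fun τ => ρ τ ^ (n-1)) volume u v := by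
    intro u v hu hv huv
    apply ContinuousOn.intervalIntegrable
    apply (hρc.mono ?_).pow
    rw [uIcc_of_le huv]
    exact Icc_subset_Icc hu hv
  have hSmono : ∀ t₁ ∈ Icc (0:ℝ) b, ∀ t₂ ∈ Icc (0:ℝ) b, t₁ < t₂ → S t₁ < S t₂ := by
    intro t₁ ht₁ t₂ ht₂ h12
    have hsplit := intervalIntegral.integral_add_adjacent_intervals
      (hintpow 0 t₁ (le_refl 0) ht₁.2 ht₁.1) (hintpow t₁ t₂ ht₁.1 ht₂.2 h12.le)
    have hposint : 0 < ∫ τ in t₁..t₂, ρ τ ^ (n-1) := by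
      apply intervalIntegral.intervalIntegral_pos_of_pos_on
        (hintpow t₁ t₂ ht₁.1 ht₂.2 h12.le) _ h12
      intro x hx
      exact pow_pos (hpos x ⟨ht₁.1.trans_lt hx.1, hx.2.trans_le ht₂.2⟩) _
    rw [hS t₁, hS t₂, ← hsplit]
    linarith
  have hTmono : ∀ s₁ ∈ Icc (0:ℝ) 1, ∀ s₂ ∈ Icc (0:ℝ) 1, s₁ ≤ s₂ → T s₁ ≤ T s₂ := by
    intro s₁ hs₁ s₂ hs₂ h12
    by_contra hcon
    push_neg at hcon
    have := hSmono (T s₂) (hTmem s₂ hs₂) (T s₁) (hTmem s₁ hs₁) hcon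
    rw [hST s₁ hs₁, hST s₂ hs₂] at this
    linarith
  -- measurability via clamping
  set Tc : ℝ → ℝ := fun s => T (max 0 (min 1 s)) with hTc
  have hclamp : ∀ s : ℝ, max 0 (min 1 s) ∈ Icc (0:ℝ) 1 :=
    fun s => ⟨le_max_left _ _, max_le zero_le_one (min_le_left _ _)⟩
  have hTcmono : Monotone Tc := by
    intro s₁ s₂ h12
    exact hTmono _ (hclamp s₁) _ (hclamp s₂)
      (max_le_max (le_refl 0) (min_le_min (le_refl 1) h12))
  have hTcmeas : Measurable Tc := hTcmono.measurable
  set ρc : ℝ → ℝ := fun t => ρ (max 0 (min b t)) with hρcdef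
  have hρcC : Continuous ρc := by
    apply hρc.comp_continuous
    · exact continuous_const.max (continuous_const.min continuous_id)
    · exact fun x => ⟨le_max_left _ _, max_le hb.le (min_le_left _ _)⟩
  set g : ℝ → ℝ := fun s => ρc (Tc s) ^ (2*n-2) * (Polynomial.eval s (Polynomial.derivative φ))^2 with hgdef
  have hgmeas : Measurable g :=
    ((hρcC.measurable.comp hTcmeas).pow_const _).mul
      ((Polynomial.continuous (Polynomial.derivative φ)).pow 2).measurable
  have hgeqf : ∀ s ∈ Icc (0:ℝ) 1, g s
      = ρ (T s) ^ (2*n-2) * (Polynomial.eval s (Polynomial.derivative φ))^2 := by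
    intro s hs
    have h1 : max 0 (min 1 s) = s := by
      rw [min_eq_right hs.2, max_eq_right hs.1]
    have h2 : Tc s = T s := by rw [hTc]; simp only [h1]
    have htm := hTmem s hs
    have h3 : max 0 (min b (T s)) = T s := by
      rw [min_eq_right htm.2, max_eq_right htm.1]
    rw [hgdef]
    simp only [h2, hρcdef, h3]
  obtain ⟨Mb, hMb⟩ := (isCompact_Icc (a := (0:ℝ)) (b := 1)).exists_bound_of_continuousOn
    ((Polynomial.continuous (Polynomial.derivative φ)).continuousOn)
  have hfint : IntervalIntegrable
      (fun s => ρ (T s) ^ (2*n-2) * (Polynomial.eval s (Polynomial.derivative φ))^2) volume 0 1 := by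
    rw [intervalIntegrable_iff_integrableOn_Ioc_of_le zero_le_one]
    have hae : (fun s => ρ (T s) ^ (2*n-2) * (Polynomial.eval s (Polynomial.derivative φ))^2)
        =ᵐ[volume.restrict (Ioc (0:ℝ) 1)] g := by
      filter_upwards [ae_restrict_mem measurableSet_Ioc] with s hs
      exact (hgeqf s (Ioc_subset_Icc_self hs)).symm
    constructor
    · exact hgmeas.aestronglyMeasurable.congr hae.symm
    · apply MeasureTheory.HasFiniteIntegral.of_bounded (C := 2^(2*n-2) * Mb^2)
      filter_upwards [ae_restrict_mem measurableSet_Ioc] with s hs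
      have hs' : s ∈ Icc (0:ℝ) 1 := Ioc_subset_Icc_self hs
      have hΦs := hΦ s hs'
      have h1 : ρ (T s) ^ (2*n-2) ≤ 2^(2*n-2) := pow_le_pow_left₀ hΦs.1 hΦs.2 _
      have h2 : (Polynomial.eval s (Polynomial.derivative φ))^2 ≤ Mb^2 := by
        have := hMb s hs'
        rw [Real.norm_eq_abs] at this
        nlinarith [abs_nonneg (Polynomial.eval s (Polynomial.derivative φ)),
          sq_abs (Polynomial.eval s (Polynomial.derivative φ))]
      have hnn : 0 ≤ ρ (T s) ^ (2*n-2) * (Polynomial.eval s (Polynomial.derivative φ))^2 :=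
        mul_nonneg (pow_nonneg hΦs.1 _) (sq_nonneg _)
      rw [Real.norm_eq_abs, abs_of_nonneg hnn]
      exact mul_le_mul h1 h2 (sq_nonneg _) (by positivity)
  calc (∫ s in (0:ℝ)..1, ρ (T s) ^ (2*n-2) * (Polynomial.eval s (Polynomial.derivative φ))^2)
      ≤ ∫ s in (0:ℝ)..1, 2^(2*n-2) * (Polynomial.eval s (Polynomial.derivative φ))^2 := by
        apply intervalIntegral.integral_mono_on zero_le_one hfint
        · exact (continuous_const.mul ((Polynomial.continuous _).pow 2)).intervalIntegrable _ _
        · intro s hs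
          have hΦs := hΦ s hs
          exact mul_le_mul_of_nonneg_right (pow_le_pow_left₀ hΦs.1 hΦs.2 _) (sq_nonneg _)
    _ = 2^(2*n-2) * ∫ s in (0:ℝ)..1, (Polynomial.eval s (Polynomial.derivative φ))^2 :=
        intervalIntegral.integral_const_mul _ _
    _ ≤ 2^(2*n-2) * (C * ∫ s in (0:ℝ)..1, (Polynomial.eval s φ)^2) := by
        apply mul_le_mul_of_nonneg_left (hpoly φ hφ hdeg) (by positivity)
    _ = (2^(2*n-2) * C) * ∫ s in (0:ℝ)..1, (Polynomial.eval s φ)^2 := by ring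
end
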